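/- For all nonzero integers m and all positive integers n, the sum over k from 1 to n of m^k * ((m-64)k^3 - 96k^2 - 48k - 8) / ((2k+1)^3 * k^3 * C(2k,k)^3) equals m^{n+1} / ((2n+1)^3 * C(2n,n)^3) - m. -/
import Mathlib

lemma key (n : ℕ) :
    (((2 * (n + 1)).choose (n + 1) : ℚ)) * (n + 1) = 2 * (2 * n + 1) * ((2 * n).choose n) := by
  have h := Nat.succ_mul_centralBinom_succ n
  simp only [Nat.centralBinom] at h
  have : (((n + 1) * ((2 * (n + 1)).choose (n + 1)) : ℕ) : ℚ)
      = ((2 * (2 * n + 1) * ((2 * n).choose n) : ℕ) : ℚ) := by exact_mod_cast h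
  push_cast at this
  linarith

theorem stmt_7 (m : ℤ) (hm : m ≠ 0) (n : ℕ) (hn : 1 ≤ n) :
    ∑ k ∈ Finset.Icc 1 n,
      ((m : ℚ) ^ k * (((m : ℚ) - 64) * k ^ 3 - 96 * k ^ 2 - 48 * k - 8)) /
        ((2 * (k : ℚ) + 1) ^ 3 * (k : ℚ) ^ 3 * ((2 * k).choose k : ℚ) ^ 3)
      = (m : ℚ) ^ (n + 1) / ((2 * (n : ℚ) + 1) ^ 3 * ((2 * n).choose n : ℚ) ^ 3) - (m : ℚ) := by
  clear hn
  induction n with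
  | zero => simp
  | succ n ih =>
    rw [Finset.sum_Icc_succ_top (by omega : 1 ≤ n + 1), ih]
    have ha : (((2 * n).choose n : ℚ)) ≠ 0 :=
      Nat.cast_ne_zero.mpr (Nat.choose_pos (by omega)).ne'
    have hb : (((2 * (n + 1)).choose (n + 1) : ℚ)) ≠ 0 :=
      Nat.cast_ne_zero.mpr (Nat.choose_pos (by omega)).ne'
    have h1 : (2 * (n : ℚ) + 1) ≠ 0 := by positivity
    have h2 : ((n : ℚ) + 1) ≠ 0 := by positivity
    have ha' : ((2 * n).choose n : ℚ)
        = ((2 * (n + 1)).choose (n + 1) : ℚ) * (n + 1) / (2 * (2 * n + 1)) := by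
      rw [eq_div_iff (by positivity)]
      linarith [key n]
    rw [ha']
    have h3 : (2 * ((n : ℚ) + 1) + 1) ≠ 0 := by positivity
    push_cast
    field_simp
    ring
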